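/- Let X be a simplicial group, n ≥ 1 and 1 ≤ j ≤ n. Then the normal (j+1)-ad of groups (X_n; Ker d^n_0, …, Ker d^n_{j-1}) is simple relative to Ker d^n_{j-1}; indeed, the subgroup F' = s^{n-1}_{j-1}(X_{n-1}) (the image of the degeneracy s^{n-1}_{j-1} : X_{n-1} → X_n) satisfies F' ∩ Ker d^n_{j-1} = 1 and ⋂_{i∈A} Ker d^n_i = (⋂_{i∈A} Ker d^n_i ∩ F')·(⋂_{i∈A} Ker d^n_i ∩ Ker d^n_{j-1}) for every A ⊆ {0,…,j-2} (including A = ∅, where the intersection is X_n). -/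

import Mathlib

open CategoryTheory Simplicial Pointwise

lemma aux_retr (X : SimplicialObject GrpCat) {n : ℕ} (i : Fin (n + 1)) (w : X _⦋n⦌) :
    (X.δ i.castSucc).hom ((X.σ i).hom w) = w := by
  show (X.σ i ≫ X.δ i.castSucc).hom w = w
  rw [X.δ_comp_σ_self]; rfl

lemma aux_ds (X : SimplicialObject GrpCat) {n : ℕ} (i : Fin (n + 2)) (p : Fin (n + 1))
    (H : i ≤ p.castSucc) (w : X _⦋n + 1⦌) :
    (X.δ i.castSucc).hom ((X.σ p.succ).hom w) = (X.σ p).hom ((X.δ i).hom w) := by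
  show (X.σ p.succ ≫ X.δ i.castSucc).hom w = (X.δ i ≫ X.σ p).hom w
  rw [X.δ_comp_σ_of_le H]

lemma aux_dd (X : SimplicialObject GrpCat) {n : ℕ} (p q : Fin (n + 2)) (H : p ≤ q)
    (w : X _⦋n + 2⦌) :
    (X.δ p).hom ((X.δ q.succ).hom w) = (X.δ q).hom ((X.δ p.castSucc).hom w) := by
  show (X.δ q.succ ≫ X.δ p).hom w = (X.δ p.castSucc ≫ X.δ q).hom w
  rw [X.δ_comp_δ H]

lemma aux_key (X : SimplicialObject GrpCat) {n : ℕ} (a : Fin (n + 2)) (b : Fin (n + 1))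
    (hab : a ≤ b.castSucc) (x : X _⦋n + 2⦌) (hx : (X.δ a.castSucc).hom x = 1) :
    (X.δ a.castSucc).hom ((X.σ b.succ).hom ((X.δ (b.castSucc).succ).hom x)) = 1 := by
  rw [aux_ds X a b hab, aux_dd X a b.castSucc hab, hx, map_one, map_one]

lemma aux_main (X : SimplicialObject GrpCat) (m' j : ℕ) (hj2' : 2 ≤ j) (hjm : j ≤ m' + 2)
    (i : Fin (m' + 3)) (hij : (i : ℕ) < j - 1)
    (J2 : Fin (m' + 2)) (hJ2 : (J2 : ℕ) = j - 1)
    (J3 : Fin (m' + 3)) (hJ3 : (J3 : ℕ) = j - 1)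
    (x : X _⦋m' + 2⦌) (hx : (X.δ i).hom x = 1) :
    (X.δ i).hom ((X.σ J2).hom ((X.δ J3).hom x)) = 1 := by
  have him : (i : ℕ) < m' + 2 := by omega
  have hb : j - 2 < m' + 1 := by omega
  refine Eq.trans ?_ (aux_key X (n := m') ⟨(i : ℕ), him⟩ ⟨j - 2, hb⟩
    (by rw [Fin.le_def]; show (i : ℕ) ≤ j - 2; omega) x ?_)
  · have h3 : i = Fin.castSucc (⟨(i : ℕ), him⟩ : Fin (m' + 2)) := Fin.ext rfl
    have h1 : J2 = (⟨j - 2, hb⟩ : Fin (m' + 1)).succ := Fin.ext (by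
      show (J2 : ℕ) = j - 2 + 1; omega)
    have h2 : J3 = (Fin.castSucc (⟨j - 2, hb⟩ : Fin (m' + 1))).succ := Fin.ext (by
      show (J3 : ℕ) = j - 2 + 1; omega)
    have e3 : (X.δ J3).hom x = (X.δ (Fin.castSucc (⟨j - 2, hb⟩ : Fin (m' + 1))).succ).hom x :=
      congrArg (fun k => (X.δ k).hom x) h2
    have e2 : (X.σ J2).hom ((X.δ J3).hom x) =
        (X.σ (⟨j - 2, hb⟩ : Fin (m' + 1)).succ).hom
          ((X.δ (Fin.castSucc (⟨j - 2, hb⟩ : Fin (m' + 1))).succ).hom x) :=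
      (congrArg (fun k => (X.σ k).hom ((X.δ J3).hom x)) h1).trans
        (congrArg (fun z => (X.σ (⟨j - 2, hb⟩ : Fin (m' + 1)).succ).hom z) e3)
    exact (congrArg (fun k => (X.δ k).hom ((X.σ J2).hom ((X.δ J3).hom x))) h3).trans
      (congrArg (fun z => (X.δ (Fin.castSucc (⟨(i : ℕ), him⟩ : Fin (m' + 2)))).hom z) e2)
  · exact (congrArg (fun k => (X.δ k).hom x)
      (Fin.ext rfl : Fin.castSucc (⟨(i : ℕ), him⟩ : Fin (m' + 2)) = i)).trans hx

set_option maxHeartbeats 1000000 in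
/-- For a simplicial group `X` and `1 ≤ j ≤ n`, the normal `(j+1)`-ad
`(X_n; Ker d^n_0, …, Ker d^n_{j-1})` is simple relative to `Ker d^n_{j-1}`, witnessed by
`F' = s^{n-1}_{j-1}(X_{n-1})`: one has `F' ∩ Ker d^n_{j-1} = 1` and
`⋂_{i∈A} Ker d^n_i = (⋂_{i∈A} Ker d^n_i ∩ F')·(⋂_{i∈A} Ker d^n_i ∩ Ker d^n_{j-1})`
for every `A ⊆ {0,…,j-2}` (with `⋂_{i∈∅} = X_n`).  Here `n = m+1`. -/
theorem simplicial_kernels_simple (X : SimplicialObject GrpCat) (m : ℕ) (j : ℕ)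
    (hj1 : 1 ≤ j) (hj2 : j ≤ m + 1) :
    (X.σ (⟨j - 1, by omega⟩ : Fin (m + 1))).hom.range
        ⊓ MonoidHom.ker (X.δ (⟨j - 1, by omega⟩ : Fin (m + 2))).hom = ⊥ ∧
    ∀ A : Finset (Fin (m + 2)), (∀ i ∈ A, (i : ℕ) < j - 1) →
      ((⨅ i ∈ A, MonoidHom.ker (X.δ i).hom) : Set (X _⦋m+1⦌)) =
        (↑((⨅ i ∈ A, MonoidHom.ker (X.δ i).hom) ⊓
            (X.σ (⟨j - 1, by omega⟩ : Fin (m + 1))).hom.range) : Set (X _⦋m+1⦌)) *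
        (↑((⨅ i ∈ A, MonoidHom.ker (X.δ i).hom) ⊓
            MonoidHom.ker (X.δ (⟨j - 1, by omega⟩ : Fin (m + 2))).hom) : Set (X _⦋m+1⦌)) := by
  have hretr : ∀ w : X _⦋m⦌,
      (X.δ (⟨j - 1, by omega⟩ : Fin (m + 2))).hom ((X.σ (⟨j - 1, by omega⟩ : Fin (m + 1))).hom w) = w :=
    fun w => aux_retr X (⟨j - 1, by omega⟩ : Fin (m + 1)) w
  constructor
  · rw [eq_bot_iff]
    rintro x ⟨⟨g, rfl⟩, hker⟩
    have hg : g = 1 := by rw [← hretr g]; exact hker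
    rw [hg, map_one]
    exact Subgroup.mem_bot.mpr rfl
  · intro A hA
    have hmemL : ∀ z : X _⦋m+1⦌,
        z ∈ (⨅ i ∈ A, (↑(MonoidHom.ker ((X.δ i).hom)) : Set (X _⦋m+1⦌))) ↔
          ∀ i ∈ A, (X.δ i).hom z = 1 := by
      intro z
      simp only [Set.iInf_eq_iInter, Set.mem_iInter, SetLike.mem_coe, MonoidHom.mem_ker]
    ext x
    constructor
    · intro hx
      have hx' : ∀ i ∈ A, (X.δ i).hom x = 1 := (hmemL x).mp hx
      obtain ⟨y, hy⟩ : ∃ y, y = (X.σ (⟨j - 1, by omega⟩ : Fin (m + 1))).hom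
          ((X.δ (⟨j - 1, by omega⟩ : Fin (m + 2))).hom x) := ⟨_, rfl⟩
      have hyker : ∀ i ∈ A, (X.δ i).hom y = 1 := by
        intro i hi
        have hij : (i : ℕ) < j - 1 := hA i hi
        have hj2' : 2 ≤ j := by omega
        obtain ⟨m', rfl⟩ : ∃ m', m = m' + 1 := ⟨m - 1, by omega⟩
        rw [hy]
        exact aux_main X m' j hj2' (by omega) i hij _ rfl _ rfl x (hx' i hi)
      have hyk : ∀ i ∈ A, (X.δ i).hom (y⁻¹ * x) = 1 := by
        intro i hi
        rw [map_mul, map_inv, hyker i hi, hx' i hi, inv_one, one_mul]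
      have hmemy : y ∈ ⨅ i ∈ A, MonoidHom.ker ((X.δ i).hom) :=
        Subgroup.mem_iInf.mpr fun i => Subgroup.mem_iInf.mpr fun hi =>
          MonoidHom.mem_ker.mpr (hyker i hi)
      have hmemz : y⁻¹ * x ∈ ⨅ i ∈ A, MonoidHom.ker ((X.δ i).hom) :=
        Subgroup.mem_iInf.mpr fun i => Subgroup.mem_iInf.mpr fun hi =>
          MonoidHom.mem_ker.mpr (hyk i hi)
      refine Set.mem_mul.mpr ⟨y, ?_, y⁻¹ * x, ?_, mul_inv_cancel_left y x⟩
      · exact SetLike.mem_coe.mpr ⟨hmemy, ⟨_, hy.symm⟩⟩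
      · refine SetLike.mem_coe.mpr ⟨hmemz, ?_⟩
        show (X.δ _).hom (y⁻¹ * x) = 1
        rw [map_mul, map_inv, hy, hretr, inv_mul_cancel]
    · rintro ⟨a, ha, b, hb, rfl⟩
      have hab : a * b ∈ ⨅ i ∈ A, MonoidHom.ker ((X.δ i).hom) :=
        mul_mem (SetLike.mem_coe.mp ha).1 (SetLike.mem_coe.mp hb).1
      exact (hmemL _).mpr fun i hi =>
        MonoidHom.mem_ker.mp (Subgroup.mem_iInf.mp (Subgroup.mem_iInf.mp hab i) hi)
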